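/- Let (S(t))_{t≥0} be a strongly continuous contraction semigroup on B with generator A, let T > 0, and let F : [0,T] × B → B satisfy: (i) for every x ∈ B the map t ↦ F(t,x) is strongly measurable; (ii) for every r > 0 there is L_r ≥ 0 with ‖F(t,x) − F(t,y)‖ ≤ L_r ‖x − y‖ whenever ‖x‖, ‖y‖ ≤ r and t ∈ [0,T]; (iii) there are a', b' ≥ 0 and N ≥ 1 with ⟨Ax + F(t, x+y), x*⟩ ≤ a'(1 + ‖y‖)^N + b'‖x‖ for all t ∈ [0,T], x ∈ D(A), y ∈ B, x* ∈ ∂‖x‖; (iv) there are constants a'', b'', m > 0 such that ⟨F(t, y+x) − F(t, y), x*⟩ ≤ a''(1 + ‖y‖)^m − b''‖x‖^m for all t ∈ [0,T], x, y ∈ B, x* ∈ ∂‖x‖, and ‖F(t, y)‖ ≤ a''(1 + ‖y‖)^m for all t ∈ [0,T], y ∈ B. If u, v : [0,T] → B are continuous and u(t) = ∫₀ᵗ S(t−s) F(s, u(s) + v(s)) ds (Bochner integral) for all t ∈ [0,T], then sup_{t ∈ [0,T]} ‖u(t)‖ ≤ (4a''/b'')^{1/m} ( 1 + sup_{t ∈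 [0,T]} ‖v(t)‖ ). -/

import Mathlib

open MeasureTheory Filter Set Topology

section PROOFAUX


section aux

variable {B : Type*} [NormedAddCommGroup B] [NormedSpace ℝ B] [CompleteSpace B]

/-- Joint continuity of the semigroup action. -/
lemma sg_jointCont (S : ℝ → B →L[ℝ] B) (hScontr : ∀ t ≥ (0:ℝ), ‖S t‖ ≤ 1)
    (hScont : ∀ x : B, ContinuousOn (fun t => S t x) (Set.Ici 0)) :
    ContinuousOn (fun p : ℝ × B => S p.1 p.2) (Set.Ici (0:ℝ) ×ˢ (Set.univ : Set B)) := by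
  rw [Metric.continuousOn_iff]
  rintro ⟨t₀, x₀⟩ hb ε hε
  have h1 := hScont x₀ t₀ hb.1
  rw [Metric.continuousWithinAt_iff] at h1
  obtain ⟨ρ, hρ, hρ'⟩ := h1 (ε/2) (by linarith)
  refine ⟨min ρ (ε/2), by positivity, ?_⟩
  rintro ⟨t, x⟩ ha hdist
  rw [Prod.dist_eq] at hdist
  have hd1 : dist t t₀ < ρ := ((le_max_left _ _).trans_lt hdist).trans_le (min_le_left _ _)
  have hd2 : dist x x₀ < ε/2 := ((le_max_right _ _).trans_lt hdist).trans_le (min_le_right _ _)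
  have hb1 : ‖S t (x - x₀)‖ ≤ ‖x - x₀‖ := by
    calc ‖S t (x - x₀)‖ ≤ ‖S t‖ * ‖x - x₀‖ := (S t).le_opNorm _
    _ ≤ 1 * ‖x - x₀‖ := mul_le_mul_of_nonneg_right (hScontr t ha.1) (norm_nonneg _)
    _ = ‖x - x₀‖ := one_mul _
  have hfirst : dist (S t x) (S t x₀) < ε/2 := by
    rw [dist_eq_norm, ← map_sub]
    exact hb1.trans_lt (by rw [← dist_eq_norm]; exact hd2)
  calc dist (S t x) (S t₀ x₀) ≤ dist (S t x) (S t x₀) + dist (S t x₀) (S t₀ x₀) :=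
        dist_triangle _ _ _
    _ < ε/2 + ε/2 := add_lt_add hfirst (hρ' ha.1 hd1)
    _ = ε := add_halves ε

lemma sg_contMax (S : ℝ → B →L[ℝ] B) (hScontr : ∀ t ≥ (0:ℝ), ‖S t‖ ≤ 1)
    (hScont : ∀ x : B, ContinuousOn (fun t => S t x) (Set.Ici 0)) :
    Continuous (fun p : ℝ × B => S (max p.1 0) p.2) := by
  rw [← continuousOn_univ]
  have h2 : ContinuousOn (fun p : ℝ × B => (max p.1 0, p.2)) univ :=
    ((continuous_fst.max continuous_const).prodMk continuous_snd).continuousOn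
  exact (sg_jointCont S hScontr hScont).comp h2
    (fun p _ => ⟨Set.mem_Ici.2 (le_max_right _ _), mem_univ _⟩)

end aux


variable {B : Type*} [NormedAddCommGroup B] [NormedSpace ℝ B] [CompleteSpace B]

set_option linter.unusedSectionVars false

lemma measF (T : ℝ) (hT : 0 < T) (F : ℝ → B → B)
    (hFmeas : ∀ x : B, AEStronglyMeasurable (fun t => F t x) (volume.restrict (Set.Icc 0 T)))
    (L R : ℝ)
    (hFlip : ∀ t ∈ Set.Icc (0:ℝ) T, ∀ x y : B, ‖x‖ ≤ R → ‖y‖ ≤ R →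
      ‖F t x - F t y‖ ≤ L * ‖x - y‖)
    (w : ℝ → B) (hw : ContinuousOn w (Set.Icc 0 T))
    (hwR : ∀ r ∈ Set.Icc (0:ℝ) T, ‖w r‖ ≤ R) :
    AEStronglyMeasurable (fun r => F r (w r)) (volume.restrict (Set.Icc 0 T)) := by
  set c : ℕ → ℕ → ℝ := fun n k => k * T / (n+1) with hc
  have hcmem : ∀ n k : ℕ, k ≤ n + 1 → c n k ∈ Set.Icc (0:ℝ) T := by
    intro n k hk
    constructor
    · simp only [hc]; positivity
    · simp only [hc]
      rw [div_le_iff₀ (by positivity)]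
      have h1 : (k:ℝ) ≤ (n:ℝ)+1 := by exact_mod_cast hk
      nlinarith [hT.le]
  set g : ℕ → ℝ → B := fun n r =>
    ∑ k ∈ Finset.range (n+1), Set.indicator (Set.Ico (c n k) (c n (k+1)))
      (fun r' => F r' (w (c n k))) r with hg
  have hgm : ∀ n, AEStronglyMeasurable (g n) (volume.restrict (Set.Icc 0 T)) := by
    intro n
    apply Finset.aestronglyMeasurable_fun_sum
    intro k _
    exact (hFmeas (w (c n k))).indicator measurableSet_Ico
  apply aestronglyMeasurable_of_tendsto_ae atTop hgm
  have hne : ∀ᵐ r : ℝ ∂volume, r ≠ T := by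
    rw [ae_iff]
    have h0 : {r : ℝ | ¬ r ≠ T} = {T} := by ext r; simp
    rw [h0]
    exact Real.volume_singleton
  filter_upwards [ae_restrict_mem measurableSet_Icc, ae_restrict_of_ae hne] with r hr hrne
  have hrI : r ∈ Set.Ico (0:ℝ) T := ⟨hr.1, lt_of_le_of_ne hr.2 hrne⟩
  set k : ℕ → ℕ := fun n => ⌊r * (n+1) / T⌋₊ with hk
  have hq0 : ∀ n : ℕ, 0 ≤ r * ((n:ℝ)+1) / T :=
    fun n => div_nonneg (mul_nonneg hrI.1 (by positivity)) hT.le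
  have hk1 : ∀ n : ℕ, (k n : ℝ) ≤ r * ((n:ℝ)+1) / T := by
    intro n
    simp only [hk]
    exact_mod_cast Nat.floor_le (hq0 n)
  have hk2 : ∀ n : ℕ, r * ((n:ℝ)+1) / T < (k n : ℝ) + 1 := by
    intro n
    simp only [hk]
    push_cast
    exact Nat.lt_floor_add_one _
  have hkn : ∀ n : ℕ, k n < n + 1 := by
    intro n
    have h2 : r * ((n:ℝ)+1) / T < (n:ℝ) + 1 := by
      rw [div_lt_iff₀ hT]
      nlinarith [hrI.2, hrI.1, hT]
    have h3 : (k n : ℝ) < (n:ℝ) + 1 := lt_of_le_of_lt (hk1 n) h2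
    exact_mod_cast h3
  have hp : ∀ n : ℕ, (0:ℝ) < (n:ℝ) + 1 := fun n => by positivity
  have hmem : ∀ n : ℕ, r ∈ Set.Ico (c n (k n)) (c n (k n + 1))  := by
    intro n
    constructor
    · simp only [hc]
      rw [div_le_iff₀ (hp n)]
      have := (le_div_iff₀ hT).mp (hk1 n)
      linarith
    · simp only [hc]
      rw [lt_div_iff₀ (hp n)]
      have := (div_lt_iff₀ hT).mp (hk2 n)
      push_cast
      linarith
  have heval : ∀ n : ℕ, g n r = F r (w (c n (k n))) := by
    intro n
    simp only [hg]
    rw [Finset.sum_eq_single_of_mem (k n) (Finset.mem_range.2 (hkn n))]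
    · exact Set.indicator_of_mem (hmem n) _
    · intro j hj hjne
      apply Set.indicator_of_notMem
      intro hrj
      apply hjne
      have h1 : (j:ℝ) ≤ r * ((n:ℝ)+1) / T := by
        rw [le_div_iff₀ hT]
        have h1' : (j:ℝ) * T / ((n:ℝ)+1) ≤ r := by
          have := hrj.1; simp only [hc] at this; exact this
        have := (div_le_iff₀ (hp n)).mp h1'
        linarith
      have h2 : r * ((n:ℝ)+1) / T < (j:ℝ) + 1 := by
        rw [div_lt_iff₀ hT]
        have h2' : r < ((j:ℝ)+1) * T / ((n:ℝ)+1) := by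
          have := hrj.2; simp only [hc] at this; push_cast at this; exact this
        have := (lt_div_iff₀ (hp n)).mp h2'
        linarith
      have h5 : (j:ℝ) < (k n : ℝ) + 1 := lt_of_le_of_lt h1 (hk2 n)
      have h6 : (k n : ℝ) < (j:ℝ) + 1 := lt_of_le_of_lt (hk1 n) h2
      have h7 : j < k n + 1 := by exact_mod_cast h5
      have h8 : k n < j + 1 := by exact_mod_cast h6
      omega
  have hcrmem : ∀ n : ℕ, c n (k n) ∈ Set.Icc (0:ℝ) T :=
    fun n => hcmem n (k n) (hkn n).le
  have hcr : Tendsto (fun n => c n (k n)) atTop (𝓝 r) := by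
    rw [tendsto_iff_dist_tendsto_zero]
    apply squeeze_zero (fun n => dist_nonneg) (g := fun n : ℕ => T / ((n:ℝ)+1))
    · intro n
      rw [Real.dist_eq, abs_of_nonpos (by linarith [(hmem n).1])]
      have h2 : r < (c n (k n)) + T/((n:ℝ)+1) := by
        have h3 := (hmem n).2
        have heq : c n (k n + 1) = c n (k n) + T/((n:ℝ)+1) := by
          simp only [hc]; push_cast; ring
        rw [heq] at h3
        exact h3
      linarith
    · have h1 : Tendsto (fun n : ℕ => T / (n:ℝ)) atTop (𝓝 0) :=
        tendsto_const_div_atTop_nhds_zero_nat T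
      have h2 := h1.comp (tendsto_add_atTop_nat 1)
      convert h2 using 2 with n
      simp [Function.comp]
  have hwc : Tendsto (fun n => w (c n (k n))) atTop (𝓝 (w r)) := by
    have h1 : Tendsto (fun n => c n (k n)) atTop (𝓝[Set.Icc (0:ℝ) T] r) := by
      rw [tendsto_nhdsWithin_iff]
      exact ⟨hcr, Eventually.of_forall hcrmem⟩
    exact ((hw r hr).tendsto).comp h1
  have hdiffto : Tendsto (fun n => F r (w (c n (k n))) - F r (w r)) atTop (𝓝 0) := by
    apply squeeze_zero_norm (a := fun n => L * ‖w (c n (k n)) - w r‖)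
    · intro n
      exact hFlip r hr _ _ (hwR _ (hcrmem n)) (hwR r hr)
    · have h3 : Tendsto (fun n => w (c n (k n)) - w r) atTop (𝓝 0) := by
        rw [show (0:B) = w r - w r by simp]
        exact hwc.sub tendsto_const_nhds
      have h2 := (h3.norm).const_mul L
      simpa using h2
  have hlim : Tendsto (fun n => F r (w (c n (k n)))) atTop (𝓝 (F r (w r))) := by
    have h4 := hdiffto.add_const (F r (w r))
    simpa using h4
  exact hlim.congr (fun n => (heval n).symm)


variable {B : Type*} [NormedAddCommGroup B] [NormedSpace ℝ B] [CompleteSpace B]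

set_option linter.unusedSectionVars false

lemma lemA (T : ℝ) (F : ℝ → B → B) (a'' b'' m : ℝ)
    (ha'' : 0 < a'') (hb'' : 0 < b'') (hm : 0 < m)
    (hdiss2 : ∀ t ∈ Set.Icc (0:ℝ) T, ∀ x y : B, ∀ φ : B →L[ℝ] ℝ,
      ‖φ‖ = 1 → φ x = ‖x‖ →
        φ (F t (y + x) - F t y) ≤ a'' * (1 + ‖y‖) ^ m - b'' * ‖x‖ ^ m)
    (C W L : ℝ) (hC : 0 ≤ C) (hW : 0 < W)
    (hWb : ∀ t ∈ Set.Icc (0:ℝ) T, ∀ x y : B, ‖x‖ ≤ C → ‖y‖ ≤ C →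
      ‖F t (y + x) - F t y‖ ≤ W)
    (hL : 0 ≤ L)
    (hLip : ∀ t ∈ Set.Icc (0:ℝ) T, ∀ p q : B, ‖p‖ ≤ 2*C + W → ‖q‖ ≤ 2*C + W →
      ‖F t p - F t q‖ ≤ L * ‖p - q‖)
    (δ : ℝ) (hδ : 0 < δ) :
    ∃ ε > 0, ∀ t ∈ Set.Icc (0:ℝ) T, ∀ x y : B, ∀ ψ : B →L[ℝ] ℝ,
      ‖x‖ ≤ C → ‖y‖ ≤ C → ‖ψ‖ ≤ 1 → ‖x‖ - ε ≤ ψ x →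
      ψ (F t (y + x) - F t y) ≤ a'' * (1 + ‖y‖) ^ m - b'' * ‖x‖ ^ m + δ := by
  -- modulus of continuity for rpow on [0, C+W]
  have hcont : ContinuousOn (fun s : ℝ => s ^ m) (Set.Icc 0 (C+W)) := by
    intro s _
    exact (Real.continuousAt_rpow_const s m (Or.inr hm.le)).continuousWithinAt
  have huc := isCompact_Icc.uniformContinuousOn_of_continuous hcont
  rw [Metric.uniformContinuousOn_iff] at huc
  obtain ⟨η, hη, hηs⟩ := huc (δ/(3*b'')) (by positivity)
  set lam := min 1 (min (η/(2*W)) (δ/(3*(L*W+1)))) with hlamdef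
  have hlam : 0 < lam := by
    apply lt_min one_pos
    apply lt_min (by positivity) (by positivity)
  have hlam1 : lam ≤ 1 := min_le_left _ _
  refine ⟨lam * (δ/3), by positivity, ?_⟩
  intro t ht x y ψ hx hy hψ hψx
  set w := F t (y + x) - F t y with hwdef
  have hw : ‖w‖ ≤ W := hWb t ht x y hx hy
  set z := x + lam • w with hzdef
  have hzx : ‖z - x‖ ≤ lam * W := by
    have h1 : z - x = lam • w := by rw [hzdef]; abel
    rw [h1, norm_smul, Real.norm_eq_abs, abs_of_pos hlam]
    exact mul_le_mul_of_nonneg_left hw hlam.le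
  have hzn : ‖z‖ ≤ C + W := by
    have h1 : ‖z‖ ≤ ‖x‖ + ‖z - x‖ := by
      have h0 : x + (z - x) = z := by abel
      calc ‖z‖ = ‖x + (z - x)‖ := by rw [h0]
      _ ≤ ‖x‖ + ‖z - x‖ := norm_add_le _ _
    have h2 : lam * W ≤ W := by nlinarith
    linarith
  -- key inequality
  have hkey : ‖z‖ ≤ ‖x‖ + lam * (a'' * (1+‖y‖)^m - b'' * ‖z‖^m) + lam * (L * (lam * W)) := by
    by_cases hz0 : z = 0
    · rw [hz0]
      rw [norm_zero, Real.zero_rpow hm.ne']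
      have h1 : 0 ≤ a'' * (1+‖y‖)^m := by positivity
      have h2 : 0 ≤ lam * (L * (lam * W)) := by positivity
      nlinarith [norm_nonneg x]
    · obtain ⟨φ, hφ1, hφ2⟩ := exists_dual_vector ℝ z (norm_ne_zero_iff.mpr hz0)
      have hφ2' : φ z = ‖z‖ := by exact_mod_cast hφ2
      set w' := F t (y + z) - F t y with hw'def
      have hdz : φ w' ≤ a'' * (1+‖y‖)^m - b'' * ‖z‖^m := hdiss2 t ht z y φ hφ1 hφ2'
      have hyx : ‖y + x‖ ≤ 2*C + W := by
        have := norm_add_le y x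
        linarith [hW.le]
      have hyz : ‖y + z‖ ≤ 2*C + W := by
        have := norm_add_le y z
        linarith
      have hww' : ‖w - w'‖ ≤ L * (lam * W) := by
        have h1 : w - w' = F t (y + x) - F t (y + z) := by
          rw [hwdef, hw'def]; abel
        rw [h1]
        have h2 := hLip t ht (y+x) (y+z) hyx hyz
        have h3 : (y + x) - (y + z) = x - z := by abel
        rw [h3] at h2
        have h4 : ‖x - z‖ ≤ lam * W := by rw [norm_sub_rev]; exact hzx
        calc ‖F t (y+x) - F t (y+z)‖ ≤ L * ‖x - z‖ := h2
        _ ≤ L * (lam * W) := mul_le_mul_of_nonneg_left h4 hL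
      have hφx : φ x ≤ ‖x‖ := by
        calc φ x ≤ |φ x| := le_abs_self _
        _ = ‖φ x‖ := (Real.norm_eq_abs _).symm
        _ ≤ ‖φ‖ * ‖x‖ := φ.le_opNorm x
        _ = ‖x‖ := by rw [hφ1, one_mul]
      have hφww' : φ (w - w') ≤ L * (lam * W) := by
        calc φ (w - w') ≤ |φ (w - w')| := le_abs_self _
        _ = ‖φ (w - w')‖ := (Real.norm_eq_abs _).symm
        _ ≤ ‖φ‖ * ‖w - w'‖ := φ.le_opNorm _
        _ = ‖w - w'‖ := by rw [hφ1, one_mul]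
        _ ≤ L * (lam * W) := hww'
      have hφw : φ w ≤ (a'' * (1+‖y‖)^m - b'' * ‖z‖^m) + L * (lam * W) := by
        have h5 : φ w = φ w' + φ (w - w') := by
          rw [← map_add]
          congr 1
          abel
        rw [h5]
        linarith
      have hz1 : ‖z‖ = φ x + lam * (φ w) := by
        rw [← hφ2', hzdef, map_add, _root_.map_smul, smul_eq_mul]
      have h6 := mul_le_mul_of_nonneg_left hφw hlam.le
      linarith [hz1, hφx]
  -- alignment step
  have hψz : ψ z ≤ ‖z‖ := by
    calc ψ z ≤ |ψ z| := le_abs_self _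
    _ = ‖ψ z‖ := (Real.norm_eq_abs _).symm
    _ ≤ ‖ψ‖ * ‖z‖ := ψ.le_opNorm z
    _ ≤ 1 * ‖z‖ := mul_le_mul_of_nonneg_right hψ (norm_nonneg _)
    _ = ‖z‖ := one_mul _
  have hψzeq : ψ z = ψ x + lam * ψ w := by
    rw [hzdef, map_add, _root_.map_smul, smul_eq_mul]
  have hpsi : lam * ψ w ≤ ‖z‖ - ‖x‖ + lam * (δ/3) := by
    have := hψzeq
    linarith
  -- divide by lam
  have hdiv : ψ w ≤ a'' * (1+‖y‖)^m - b'' * ‖z‖^m + L * (lam * W) + δ/3 := by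
    have h7 : lam * ψ w ≤ lam * (a'' * (1+‖y‖)^m - b'' * ‖z‖^m + L * (lam * W) + δ/3) := by
      have h8 : lam * (a'' * (1+‖y‖)^m - b'' * ‖z‖^m + L * (lam * W) + δ/3)
          = lam * (a'' * (1+‖y‖)^m - b'' * ‖z‖^m) + lam * (L * (lam * W)) + lam * (δ/3) := by
        ring
      rw [h8]
      linarith
    exact le_of_mul_le_mul_left h7 hlam
  -- rpow perturbation
  have hpert : b'' * ‖x‖^m - b'' * ‖z‖^m ≤ δ/3 := by
    have hxm : ‖x‖ ∈ Set.Icc (0:ℝ) (C+W) := ⟨norm_nonneg _, by linarith [hW.le]⟩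
    have hzm : ‖z‖ ∈ Set.Icc (0:ℝ) (C+W) := ⟨norm_nonneg _, hzn⟩
    have hlamW : lam * W ≤ η/2 := by
      have h9 : lam ≤ η/(2*W) := (min_le_right _ _).trans (min_le_left _ _)
      calc lam * W ≤ (η/(2*W))*W := mul_le_mul_of_nonneg_right h9 hW.le
      _ = η/2 := by
          rw [div_mul_eq_mul_div, mul_comm (2:ℝ) W, ← div_div, mul_div_assoc]
          rw [div_self hW.ne', mul_one]
    have hd : dist ‖x‖ ‖z‖ < η := by
      rw [Real.dist_eq]
      have h10 : |‖x‖ - ‖z‖| ≤ ‖x - z‖ := abs_norm_sub_norm_le x z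
      have h11 : ‖x - z‖ ≤ lam * W := by rw [norm_sub_rev]; exact hzx
      linarith
    have h12 := hηs ‖x‖ hxm ‖z‖ hzm hd
    rw [Real.dist_eq] at h12
    have h13 : ‖x‖^m - ‖z‖^m ≤ δ/(3*b'') := (le_abs_self _).trans h12.le
    calc b'' * ‖x‖^m - b'' * ‖z‖^m = b'' * (‖x‖^m - ‖z‖^m) := by ring
    _ ≤ b'' * (δ/(3*b'')) := mul_le_mul_of_nonneg_left h13 hb''.le
    _ = δ/3 := by field_simp
  have hlamLW : L * (lam * W) ≤ δ/3 := by
    have h14 : lam ≤ δ/(3*(L*W+1)) := (min_le_right _ _).trans (min_le_right _ _)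
    have hLW : 0 ≤ L*W := mul_nonneg hL hW.le
    calc L * (lam * W) = lam * (L*W) := by ring
    _ ≤ (δ/(3*(L*W+1))) * (L*W) := mul_le_mul_of_nonneg_right h14 hLW
    _ ≤ δ/3 := by
        rw [div_mul_eq_mul_div, div_le_div_iff₀ (by positivity) (by norm_num : (0:ℝ) < 3)]
        nlinarith [mul_nonneg hδ.le hLW]
  linarith
end PROOFAUX

set_option maxHeartbeats 2000000 in
/-- dissipative bound, Lemma 3.8 of the paper. -/
theorem stmt_14
    {B : Type*} [NormedAddCommGroup B] [NormedSpace ℝ B] [CompleteSpace B]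
    -- (S(t))_{t ≥ 0} a strongly continuous contraction semigroup on B
    (S : ℝ → B →L[ℝ] B)
    (hS0 : S 0 = ContinuousLinearMap.id ℝ B)
    (hSadd : ∀ s ≥ (0:ℝ), ∀ t ≥ (0:ℝ), S (s + t) = (S s).comp (S t))
    (hScontr : ∀ t ≥ (0:ℝ), ‖S t‖ ≤ 1)
    (hScont : ∀ x : B, ContinuousOn (fun t => S t x) (Set.Ici 0))
    -- the generator A with domain Adom
    (Adom : Set B) (A : B → B)
    (hAdom : ∀ x : B, x ∈ Adom ↔
      ∃ y : B, Tendsto (fun h : ℝ => h⁻¹ • (S h x - x)) (nhdsWithin 0 (Set.Ioi 0)) (nhds y))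
    (hA : ∀ x ∈ Adom,
      Tendsto (fun h : ℝ => h⁻¹ • (S h x - x)) (nhdsWithin 0 (Set.Ioi 0)) (nhds (A x)))
    (T : ℝ) (hT : 0 < T)
    (F : ℝ → B → B)
    -- (i) strong measurability
    (hFmeas : ∀ x : B, AEStronglyMeasurable (fun t => F t x) (volume.restrict (Set.Icc 0 T)))
    -- (ii) local Lipschitz continuity
    (hFlip : ∀ r : ℝ, 0 < r → ∃ L : ℝ, 0 ≤ L ∧ ∀ t ∈ Set.Icc 0 T, ∀ x y : B,
      ‖x‖ ≤ r → ‖y‖ ≤ r → ‖F t x - F t y‖ ≤ L * ‖x - y‖)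
    -- (iii) the (F′) dissipativity-type estimate, with x* ∈ ∂‖x‖
    (a' b' N : ℝ) (ha' : 0 ≤ a') (hb' : 0 ≤ b') (hN : 1 ≤ N)
    (hdiss : ∀ t ∈ Set.Icc 0 T, ∀ x ∈ Adom, ∀ y : B, ∀ φ : B →L[ℝ] ℝ,
      ‖φ‖ = 1 → φ x = ‖x‖ → φ (A x + F t (x + y)) ≤ a' * (1 + ‖y‖) ^ N + b' * ‖x‖)
    -- (iv) the (F″) conditions
    (a'' b'' m : ℝ) (ha'' : 0 < a'') (hb'' : 0 < b'') (hm : 0 < m)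
    (hdiss2 : ∀ t ∈ Set.Icc 0 T, ∀ x y : B, ∀ φ : B →L[ℝ] ℝ,
      ‖φ‖ = 1 → φ x = ‖x‖ →
        φ (F t (y + x) - F t y) ≤ a'' * (1 + ‖y‖) ^ m - b'' * ‖x‖ ^ m)
    (hFgrowth : ∀ t ∈ Set.Icc 0 T, ∀ y : B, ‖F t y‖ ≤ a'' * (1 + ‖y‖) ^ m)
    (u v : ℝ → B)
    (hucont : ContinuousOn u (Set.Icc 0 T)) (hvcont : ContinuousOn v (Set.Icc 0 T))
    (hueq : ∀ t ∈ Set.Icc 0 T, u t = ∫ s in (0:ℝ)..t, S (t - s) (F s (u s + v s))) :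
    ⨆ t : Set.Icc (0:ℝ) T, ‖u (t : ℝ)‖ ≤
      (4 * a'' / b'') ^ (1 / m) * (1 + ⨆ t : Set.Icc (0:ℝ) T, ‖v (t : ℝ)‖) := by
  clear hAdom hA hdiss ha' hb' hN
  have hT0 : (0:ℝ) ≤ T := hT.le
  have h0T : (0:ℝ) ∈ Set.Icc (0:ℝ) T := ⟨le_refl _, hT0⟩
  haveI : Nonempty (Set.Icc (0:ℝ) T) := ⟨⟨0, h0T⟩⟩
  have hu0 : u 0 = 0 := by simpa using hueq 0 h0T
  -- bounds on u
  obtain ⟨Ku, hKu⟩ : ∃ Ku : ℝ, ∀ t ∈ Set.Icc (0:ℝ) T, ‖u t‖ ≤ Ku := by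
    obtain ⟨Ku, hKu⟩ :=
      (isCompact_Icc.image_of_continuousOn
        (continuous_norm.comp_continuousOn hucont)).bddAbove
    exact ⟨Ku, fun t ht => hKu ⟨t, ht, rfl⟩⟩
  have hKu0 : 0 ≤ Ku := (norm_nonneg _).trans (hKu 0 h0T)
  -- sup of v
  set Kv := ⨆ t : Set.Icc (0:ℝ) T, ‖v (t : ℝ)‖ with hKvdef
  have hbddv : BddAbove (Set.range fun t : Set.Icc (0:ℝ) T => ‖v (t:ℝ)‖) := by
    have hbv := (isCompact_Icc.image_of_continuousOn
      (continuous_norm.comp_continuousOn hvcont)).bddAbove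
    rw [Set.image_eq_range] at hbv
    exact hbv
  have hKv1 : ∀ t ∈ Set.Icc (0:ℝ) T, ‖v t‖ ≤ Kv := fun t ht => le_ciSup hbddv ⟨t, ht⟩
  have hKv0 : 0 ≤ Kv := (norm_nonneg _).trans (hKv1 0 h0T)
  -- Lipschitz constant at radius Ku + Kv + 1
  obtain ⟨L₁, hL₁0, hL₁⟩ := hFlip (Ku + Kv + 1) (by positivity)
  -- the nonlinearity along the solution
  set fu : ℝ → B := fun r => F r (u r + v r) with hfudef
  have hueq' : ∀ t ∈ Set.Icc (0:ℝ) T, u t = ∫ s in (0:ℝ)..t, S (t - s) (fu s) := hueq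
  have hfm : AEStronglyMeasurable fu (volume.restrict (Set.Icc 0 T)) := by
    apply measF T hT F hFmeas L₁ (Ku + Kv + 1)
      (fun t ht x y hx hy => hL₁ t ht x y hx hy)
      (fun r => u r + v r) (hucont.add hvcont)
    intro r hr
    have := norm_add_le (u r) (v r)
    have h1 := hKu r hr
    have h2 := hKv1 r hr
    linarith
  -- bound on fu
  set Mf := a'' * (1 + (Ku + Kv)) ^ m with hMfdef
  have hMf : ∀ r ∈ Set.Icc (0:ℝ) T, ‖fu r‖ ≤ Mf := by
    intro r hr
    refine (hFgrowth r hr _).trans ?_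
    apply mul_le_mul_of_nonneg_left _ ha''.le
    apply Real.rpow_le_rpow (by positivity) _ hm.le
    have := norm_add_le (u r) (v r)
    have h1 := hKu r hr
    have h2 := hKv1 r hr
    linarith
  -- interval integrability
  have hIntS : ∀ a b c : ℝ, 0 ≤ a → a ≤ b → b ≤ T → b ≤ c →
      IntervalIntegrable (fun r => S (c - r) (fu r)) volume a b := by
    intro a b c ha hab hbT hbc
    rw [intervalIntegrable_iff_integrableOn_Ioc_of_le hab]
    have hsub : Set.Ioc a b ⊆ Set.Icc 0 T := fun r hr => ⟨ha.trans hr.1.le, hr.2.trans hbT⟩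
    have hmeas2 : AEStronglyMeasurable (fun r => S (c - r) (fu r))
        (volume.restrict (Set.Ioc a b)) := by
      have hpair : AEStronglyMeasurable (fun r => ((c - r : ℝ), fu r))
          (volume.restrict (Set.Ioc a b)) := by
        apply AEStronglyMeasurable.prodMk
        · exact (continuous_const.sub continuous_id).aestronglyMeasurable
        · exact hfm.mono_measure (Measure.restrict_mono hsub le_rfl)
      have hmeas1 := (sg_contMax S hScontr hScont).comp_aestronglyMeasurable hpair
      apply hmeas1.congr
      rw [Filter.EventuallyEq, ae_restrict_iff' measurableSet_Ioc]
      refine ae_of_all _ (fun r hr => ?_)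
      simp only
      rw [max_eq_left (by linarith [hr.2, hbc] : (0:ℝ) ≤ c - r)]
    apply Integrable.mono' (g := fun _ => Mf)
      (integrableOn_const measure_Ioc_lt_top.ne) hmeas2
    rw [ae_restrict_iff' measurableSet_Ioc]
    refine ae_of_all _ (fun r hr => ?_)
    have hd0 : (0:ℝ) ≤ c - r := by linarith [hr.2, hbc]
    calc ‖S (c - r) (fu r)‖ ≤ ‖S (c - r)‖ * ‖fu r‖ := (S _).le_opNorm _
    _ ≤ 1 * Mf := mul_le_mul (hScontr _ hd0) (hMf r (hsub hr)) (norm_nonneg _) zero_le_one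
    _ = Mf := one_mul _
  -- segment identity
  have hseg : ∀ σ τ : ℝ, 0 ≤ σ → σ ≤ τ → τ ≤ T →
      u τ = S (τ - σ) (u σ) + ∫ r in σ..τ, S (τ - r) (fu r) := by
    intro σ τ hσ hστ hτ
    have hσT : σ ≤ T := hστ.trans hτ
    have h1 : u τ = ∫ r in (0:ℝ)..τ, S (τ - r) (fu r) := hueq' τ ⟨hσ.trans hστ, hτ⟩
    have hi1 := hIntS 0 σ τ le_rfl hσ hσT hστ
    have hi2 := hIntS σ τ τ hσ hστ hτ le_rfl
    rw [← intervalIntegral.integral_add_adjacent_intervals hi1 hi2] at h1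
    have h2 : (∫ r in (0:ℝ)..σ, S (τ - r) (fu r)) = S (τ - σ) (u σ) := by
      have h3 : Set.EqOn (fun r => S (τ - r) (fu r))
          (fun r => S (τ - σ) (S (σ - r) (fu r))) (Set.uIcc 0 σ) := by
        intro r hr
        rw [Set.uIcc_of_le hσ] at hr
        have h4 : τ - r = (τ - σ) + (σ - r) := by ring
        simp only
        rw [h4, hSadd (τ - σ) (by linarith) (σ - r) (by linarith [hr.2])]
        rfl
      rw [intervalIntegral.integral_congr h3,
        ContinuousLinearMap.intervalIntegral_comp_comm (S (τ - σ))
          (hIntS 0 σ σ le_rfl hσ hσT le_rfl),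
        ← hueq' σ ⟨hσ, hσT⟩]
    rw [h1, h2]
  -- uniform strong continuity of the semigroup on the image of u
  have hSG : ∀ ε > 0, ∃ h₀ > 0, ∀ d : ℝ, 0 ≤ d → d ≤ h₀ →
      ∀ t ∈ Set.Icc (0:ℝ) T, ‖S d (u t) - u t‖ ≤ ε := by
    intro ε hε
    have hcomp : IsCompact ((Set.Icc (0:ℝ) 1) ×ˢ (u '' Set.Icc 0 T)) :=
      isCompact_Icc.prod (isCompact_Icc.image_of_continuousOn hucont)
    have hcontΦ : ContinuousOn (fun p : ℝ × B => S p.1 p.2)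
        ((Set.Icc (0:ℝ) 1) ×ˢ (u '' Set.Icc 0 T)) :=
      (sg_jointCont S hScontr hScont).mono
        (Set.prod_mono Set.Icc_subset_Ici_self (Set.subset_univ _))
    have huc := hcomp.uniformContinuousOn_of_continuous hcontΦ
    rw [Metric.uniformContinuousOn_iff] at huc
    obtain ⟨η, hη, hηs⟩ := huc ε hε
    refine ⟨min (η/2) 1, by positivity, ?_⟩
    intro d hd0 hd t ht
    have hp : ((d, u t) : ℝ × B) ∈ (Set.Icc (0:ℝ) 1) ×ˢ (u '' Set.Icc 0 T) :=
      ⟨⟨hd0, hd.trans (min_le_right _ _)⟩, ⟨t, ht, rfl⟩⟩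
    have hq : (((0:ℝ), u t) : ℝ × B) ∈ (Set.Icc (0:ℝ) 1) ×ˢ (u '' Set.Icc 0 T) :=
      ⟨⟨le_rfl, zero_le_one⟩, ⟨t, ht, rfl⟩⟩
    have hdist : dist ((d, u t) : ℝ × B) (((0:ℝ), u t) : ℝ × B) < η := by
      rw [Prod.dist_eq]
      have h1 : dist (u t) (u t) = 0 := dist_self _
      have h2 : dist d 0 < η := by
        rw [Real.dist_eq, sub_zero, abs_of_nonneg hd0]
        have := hd.trans (min_le_left _ _)
        linarith
      rw [h1, max_eq_left dist_nonneg]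
      exact h2
    have h3 := hηs _ hp _ hq hdist
    have h5 : dist (S d (u t)) (S 0 (u t)) < ε := h3
    have h4 : S 0 (u t) = u t := by rw [hS0]; rfl
    rw [h4] at h5
    rw [← dist_eq_norm]
    exact h5.le
  -- uniform continuity of u
  have hUC : ∀ ε > 0, ∃ h₀ > 0, ∀ r ∈ Set.Icc (0:ℝ) T, ∀ s ∈ Set.Icc (0:ℝ) T,
      |r - s| ≤ h₀ → ‖u r - u s‖ ≤ ε := by
    intro ε hε
    have huc := isCompact_Icc.uniformContinuousOn_of_continuous hucont
    rw [Metric.uniformContinuousOn_iff] at huc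
    obtain ⟨η, hη, hηs⟩ := huc ε hε
    refine ⟨η/2, by positivity, fun r hr s hs hd => ?_⟩
    have h1 := hηs r hr s hs (by rw [Real.dist_eq]; linarith)
    rw [dist_eq_norm] at h1
    exact h1.le
  -- instantiate Lemma A
  set CC := Ku + Kv with hCCdef
  set W := 2 * a'' * (1 + 2 * CC) ^ m with hWdef
  have hW : 0 < W := by positivity
  have hWb : ∀ t ∈ Set.Icc (0:ℝ) T, ∀ x y : B, ‖x‖ ≤ CC → ‖y‖ ≤ CC →
      ‖F t (y + x) - F t y‖ ≤ W := by
    intro t ht x y hx hy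
    have hyx : (1 + ‖y + x‖) ^ m ≤ (1 + 2*CC) ^ m := by
      apply Real.rpow_le_rpow (by positivity) _ hm.le
      have := norm_add_le y x
      have hx0 := norm_nonneg x
      have hy0 := norm_nonneg y
      linarith
    have hyy : (1 + ‖y‖) ^ m ≤ (1 + 2*CC) ^ m := by
      apply Real.rpow_le_rpow (by positivity) _ hm.le
      have hy0 := norm_nonneg y
      have hx0 := norm_nonneg x
      linarith [hx]
    calc ‖F t (y + x) - F t y‖ ≤ ‖F t (y + x)‖ + ‖F t y‖ := norm_sub_le _ _
    _ ≤ a'' * (1 + ‖y + x‖) ^ m + a'' * (1 + ‖y‖) ^ m :=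
        add_le_add (hFgrowth t ht _) (hFgrowth t ht _)
    _ ≤ a'' * (1 + 2*CC) ^ m + a'' * (1 + 2*CC) ^ m :=
        add_le_add (mul_le_mul_of_nonneg_left hyx ha''.le)
          (mul_le_mul_of_nonneg_left hyy ha''.le)
    _ = W := by rw [hWdef]; ring
  obtain ⟨L₂, hL₂0, hL₂⟩ := hFlip (2*CC + W) (by positivity)
  have hlemA := fun (δ : ℝ) (hδ : 0 < δ) =>
    lemA T F a'' b'' m ha'' hb'' hm hdiss2 CC W L₂ (by positivity) hW hWb hL₂0
      (fun t ht p q hp hq => hL₂ t ht p q hp hq) δ hδ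
  -- the increment estimate
  have hInc : ∀ δ' > 0, ∃ h₀ > 0, ∀ σ τ : ℝ, 0 ≤ σ → σ ≤ τ → τ ≤ T → τ - σ ≤ h₀ →
      u τ ≠ 0 →
      ‖u τ‖ ≤ ‖u σ‖ + (τ - σ) * (2*a''*(1+Kv)^m - b''*‖u τ‖^m + δ') := by
    intro δ' hδ'
    obtain ⟨εA, hεA, hlemA'⟩ := hlemA (δ'/2) (by positivity)
    obtain ⟨h₁, hh₁, hSG'⟩ := hSG εA hεA
    obtain ⟨h₂, hh₂, hUC'⟩ := hUC (δ'/(2*(L₁+1))) (by positivity)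
    refine ⟨min h₁ h₂, lt_min hh₁ hh₂, ?_⟩
    intro σ τ hσ hστ hτT hstep huτ
    have hτIcc : τ ∈ Set.Icc (0:ℝ) T := ⟨hσ.trans hστ, hτT⟩
    obtain ⟨φ, hφ1, hφ2⟩ := exists_dual_vector ℝ (u τ) (norm_ne_zero_iff.mpr huτ)
    have hφ2' : φ (u τ) = ‖u τ‖ := by exact_mod_cast hφ2
    -- pointwise bound on the integrand
    have hpt : ∀ r ∈ Set.Icc σ τ, φ (S (τ - r) (fu r)) ≤
        2*a''*(1+Kv)^m - b''*‖u τ‖^m + δ' := by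
      intro r hr
      have hrIcc : r ∈ Set.Icc (0:ℝ) T := ⟨hσ.trans hr.1, hr.2.trans hτT⟩
      have hd0 : 0 ≤ τ - r := by linarith [hr.2]
      have hdh1 : τ - r ≤ h₁ := by
        have := hr.1
        have h5 := min_le_left h₁ h₂
        linarith
      have hdh2 : τ - r ≤ h₂ := by
        have := hr.1
        have h5 := min_le_right h₁ h₂
        linarith
      set ψ := φ.comp (S (τ - r)) with hψdef
      have hψn : ‖ψ‖ ≤ 1 := by
        calc ‖ψ‖ ≤ ‖φ‖ * ‖S (τ-r)‖ := ContinuousLinearMap.opNorm_comp_le _ _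
        _ ≤ 1 * 1 := by
            rw [hφ1, one_mul]
            exact (hScontr _ hd0).trans (by norm_num)
        _ = 1 := one_mul 1
      have hψx : ‖u τ‖ - εA ≤ ψ (u τ) := by
        have h5 : ψ (u τ) = φ (u τ) + φ (S (τ-r) (u τ) - u τ) := by
          rw [hψdef]
          simp only [ContinuousLinearMap.comp_apply]
          rw [← map_add]
          congr 1
          abel
        have h6 : |φ (S (τ-r) (u τ) - u τ)| ≤ ‖S (τ-r) (u τ) - u τ‖ := by
          calc |φ (S (τ-r) (u τ) - u τ)| = ‖φ (S (τ-r) (u τ) - u τ)‖ :=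
              (Real.norm_eq_abs _).symm
          _ ≤ ‖φ‖ * ‖S (τ-r) (u τ) - u τ‖ := φ.le_opNorm _
          _ = ‖S (τ-r) (u τ) - u τ‖ := by rw [hφ1, one_mul]
        have h7 := hSG' (τ - r) hd0 hdh1 τ hτIcc
        have h8 := neg_abs_le (φ (S (τ-r) (u τ) - u τ))
        rw [h5, hφ2']
        linarith
      -- decomposition
      have hdecomp : fu r = (F r (v r + u τ) - F r (v r)) +
          ((F r (u r + v r) - F r (v r + u τ)) + F r (v r)) := by
        rw [hfudef]
        abel
      have hD := hlemA' r hrIcc (u τ) (v r) ψ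
        (by rw [hCCdef]; linarith [hKu τ hτIcc, hKv0])
        (by rw [hCCdef]; linarith [hKv1 r hrIcc, hKu0]) hψn hψx
      have hvrKv : (1 + ‖v r‖) ^ m ≤ (1 + Kv) ^ m :=
        Real.rpow_le_rpow (by positivity) (by linarith [hKv1 r hrIcc]) hm.le
      have hD' : ψ (F r (v r + u τ) - F r (v r)) ≤
          a''*(1+Kv)^m - b''*‖u τ‖^m + δ'/2 := by
        refine hD.trans ?_
        have := mul_le_mul_of_nonneg_left hvrKv ha''.le
        linarith
      have hE : ψ (F r (u r + v r) - F r (v r + u τ)) ≤ δ'/2 := by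
        have h8 : ‖(u r + v r) - (v r + u τ)‖ = ‖u r - u τ‖ := by
          congr 1
          abel
        have h9 : ‖F r (u r + v r) - F r (v r + u τ)‖ ≤ L₁ * ‖u r - u τ‖ := by
          have h10 := hL₁ r hrIcc (u r + v r) (v r + u τ)
            (by linarith [norm_add_le (u r) (v r), hKu r hrIcc, hKv1 r hrIcc])
            (by linarith [norm_add_le (v r) (u τ), hKu τ hτIcc, hKv1 r hrIcc])
          rw [h8] at h10
          exact h10
        have h11 : ‖u r - u τ‖ ≤ δ'/(2*(L₁+1)) := by
          apply hUC' r hrIcc τ hτIcc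
          rw [abs_of_nonpos (by linarith [hr.2])]
          linarith
        have h12 : L₁ * ‖u r - u τ‖ ≤ δ'/2 := by
          have h13 : L₁ * ‖u r - u τ‖ ≤ L₁ * (δ'/(2*(L₁+1))) :=
            mul_le_mul_of_nonneg_left h11 hL₁0
        -- L₁ * (δ'/(2*(L₁+1))) ≤ δ'/2
          have h14 : L₁ * (δ'/(2*(L₁+1))) ≤ δ'/2 := by
            rw [mul_comm, div_mul_eq_mul_div,
              div_le_div_iff₀ (by positivity) (by norm_num : (0:ℝ) < 2)]
            nlinarith [mul_nonneg hδ'.le hL₁0]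
          linarith
        calc ψ (F r (u r + v r) - F r (v r + u τ)) ≤
            |ψ (F r (u r + v r) - F r (v r + u τ))| := le_abs_self _
        _ = ‖ψ (F r (u r + v r) - F r (v r + u τ))‖ := (Real.norm_eq_abs _).symm
        _ ≤ ‖ψ‖ * ‖F r (u r + v r) - F r (v r + u τ)‖ := ψ.le_opNorm _
        _ ≤ 1 * (L₁ * ‖u r - u τ‖) :=
            mul_le_mul hψn h9 (norm_nonneg _) zero_le_one
        _ = L₁ * ‖u r - u τ‖ := one_mul _
        _ ≤ δ'/2 := h12
      have hG : ψ (F r (v r)) ≤ a''*(1+Kv)^m := by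
        calc ψ (F r (v r)) ≤ |ψ (F r (v r))| := le_abs_self _
        _ = ‖ψ (F r (v r))‖ := (Real.norm_eq_abs _).symm
        _ ≤ ‖ψ‖ * ‖F r (v r)‖ := ψ.le_opNorm _
        _ ≤ 1 * (a''*(1+‖v r‖)^m) :=
            mul_le_mul hψn (hFgrowth r hrIcc _) (norm_nonneg _) zero_le_one
        _ = a''*(1+‖v r‖)^m := one_mul _
        _ ≤ a''*(1+Kv)^m := mul_le_mul_of_nonneg_left hvrKv ha''.le
      have heq : φ (S (τ - r) (fu r)) = ψ (fu r) := rfl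
      rw [heq, hdecomp, map_add, map_add]
      linarith
    -- assemble the increment bound
    have hIi := hIntS σ τ τ hσ hστ hτT le_rfl
    have hIq : IntervalIntegrable (fun r => φ (S (τ - r) (fu r))) volume σ τ := by
      rw [intervalIntegrable_iff_integrableOn_Ioc_of_le hστ] at hIi ⊢
      exact φ.integrable_comp hIi
    have hIc : IntervalIntegrable (fun _ : ℝ => 2*a''*(1+Kv)^m - b''*‖u τ‖^m + δ')
        volume σ τ := intervalIntegrable_const
    have hint : φ (∫ r in σ..τ, S (τ - r) (fu r)) =
        ∫ r in σ..τ, φ (S (τ - r) (fu r)) :=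
      (ContinuousLinearMap.intervalIntegral_comp_comm φ hIi).symm
    have hmono := intervalIntegral.integral_mono_on hστ hIq hIc hpt
    have hconst : (∫ _ in σ..τ, (2*a''*(1+Kv)^m - b''*‖u τ‖^m + δ')) =
        (τ - σ) * (2*a''*(1+Kv)^m - b''*‖u τ‖^m + δ') := by
      rw [intervalIntegral.integral_const, smul_eq_mul]
    have hseg' := hseg σ τ hσ hστ hτT
    have hfirst : φ (S (τ - σ) (u σ)) ≤ ‖u σ‖ := by
      calc φ (S (τ-σ) (u σ)) ≤ |φ (S (τ-σ) (u σ))| := le_abs_self _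
      _ = ‖φ (S (τ-σ) (u σ))‖ := (Real.norm_eq_abs _).symm
      _ ≤ ‖φ‖ * ‖S (τ-σ) (u σ)‖ := φ.le_opNorm _
      _ = ‖S (τ-σ) (u σ)‖ := by rw [hφ1, one_mul]
      _ ≤ ‖S (τ-σ)‖ * ‖u σ‖ := (S _).le_opNorm _
      _ ≤ 1 * ‖u σ‖ := mul_le_mul_of_nonneg_right (hScontr _ (by linarith)) (norm_nonneg _)
      _ = ‖u σ‖ := one_mul _
    calc ‖u τ‖ = φ (u τ) := hφ2'.symm
    _ = φ (S (τ-σ) (u σ)) + φ (∫ r in σ..τ, S (τ - r) (fu r)) := by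
        rw [hseg', map_add]
    _ ≤ ‖u σ‖ + (τ - σ) * (2*a''*(1+Kv)^m - b''*‖u τ‖^m + δ') := by
        rw [hint]
        have h15 := hmono.trans_eq hconst
        linarith
  -- the threshold
  set θ := (2*a''/b'')^(1/m) * (1+Kv) with hθdef
  have hθ0 : 0 ≤ θ := by positivity
  have hθeq : b'' * θ^m = 2*a''*(1+Kv)^m := by
    rw [hθdef, Real.mul_rpow (by positivity) (by positivity),
      ← Real.rpow_mul (by positivity : (0:ℝ) ≤ 2*a''/b''),
      one_div_mul_cancel hm.ne', Real.rpow_one]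
    field_simp
  -- the main claim
  have hmain : ∀ t₀ ∈ Set.Icc (0:ℝ) T, ‖u t₀‖ ≤ θ := by
    intro t₀ ht₀
    by_contra hgt
    push_neg at hgt
    set Sset := {s : ℝ | s ∈ Set.Icc 0 t₀ ∧ ‖u s‖ ≤ θ} with hSsetdef
    have hS0' : (0:ℝ) ∈ Sset := ⟨⟨le_rfl, ht₀.1⟩, by rw [hu0, norm_zero]; exact hθ0⟩
    have hSbdd : BddAbove Sset := ⟨t₀, fun s hs => hs.1.2⟩
    have hScl : IsClosed Sset := by
      have hset : Sset = Set.Icc 0 t₀ ∩ (fun s => ‖u s‖) ⁻¹' (Set.Iic θ) := by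
        ext s
        simp [hSsetdef, Set.mem_setOf_eq, Set.mem_inter_iff]
      rw [hset]
      exact ContinuousOn.preimage_isClosed_of_isClosed
        ((continuous_norm.comp_continuousOn hucont).mono
          (Set.Icc_subset_Icc le_rfl ht₀.2)) isClosed_Icc isClosed_Iic
    set s₁ := sSup Sset with hs₁def
    have hs₁mem : s₁ ∈ Sset := hScl.csSup_mem ⟨0, hS0'⟩ hSbdd
    have hs₁0 : 0 ≤ s₁ := hs₁mem.1.1
    have hs₁T : s₁ ≤ T := hs₁mem.1.2.trans ht₀.2
    have hs₁lt : s₁ < t₀ := by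
      rcases lt_or_eq_of_le hs₁mem.1.2 with h | h
      · exact h
      · exfalso
        rw [h] at hs₁mem
        linarith [hs₁mem.2]
    have habove : ∀ r, s₁ < r → r ≤ t₀ → θ < ‖u r‖ := by
      intro r h1 h2
      by_contra h3
      push_neg at h3
      have hmem : r ∈ Sset := ⟨⟨hs₁0.trans h1.le, h2⟩, h3⟩
      exact absurd (le_csSup hSbdd hmem) (not_le.2 h1)
    have hfinal : ∀ δ > 0, ‖u t₀‖ ≤ θ + δ := by
      intro δ hδ
      obtain ⟨h₀, hh₀, hInc'⟩ := hInc (δ/T) (by positivity)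
      set n := max 1 ⌈(t₀ - s₁)/h₀⌉₊ with hndef
      have hn0 : 0 < n := lt_of_lt_of_le one_pos (le_max_left _ _)
      have hn0' : (0:ℝ) < n := by exact_mod_cast hn0
      set hstep := (t₀ - s₁)/(n:ℝ) with hstepdef
      have hh0 : 0 < hstep := div_pos (by linarith) hn0'
      have hhh₀ : hstep ≤ h₀ := by
        rw [hstepdef, div_le_iff₀ hn0']
        have h1 : (t₀ - s₁)/h₀ ≤ (n:ℝ) := by
          refine (Nat.le_ceil _).trans ?_
          exact_mod_cast le_max_right 1 ⌈(t₀ - s₁)/h₀⌉₊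
        rw [div_le_iff₀ hh₀] at h1
        nlinarith
      set tt : ℕ → ℝ := fun i => s₁ + i*hstep with httdef
      have httmono : ∀ i j : ℕ, i ≤ j → tt i ≤ tt j := by
        intro i j hij
        simp only [httdef]
        have h1 : (i:ℝ) ≤ (j:ℝ) := by exact_mod_cast hij
        nlinarith
      have httn : tt n = t₀ := by
        simp only [httdef, hstepdef]
        field_simp
        ring
      have htt0 : ∀ i : ℕ, i ≤ n → tt i ∈ Set.Icc (0:ℝ) T := by
        intro i hi
        refine ⟨?_, ?_⟩
        · simp only [httdef]
          positivity
        · calc tt i ≤ tt n := httmono i n hi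
          _ = t₀ := httn
          _ ≤ T := ht₀.2
      have hstep' : ∀ i : ℕ, i < n → ‖u (tt (i+1))‖ - ‖u (tt i)‖ ≤ hstep * (δ/T) := by
        intro i hi
        have hi1n : i + 1 ≤ n := hi
        have hi1 : tt (i+1) ∈ Set.Icc (0:ℝ) T := htt0 (i+1) hi1n
        have hlt : s₁ < tt (i+1) := by
          simp only [httdef]
          have h1 : (0:ℝ) < ((i:ℝ)+1)*hstep := by positivity
          push_cast
          linarith
        have hle : tt (i+1) ≤ t₀ := by rw [← httn]; exact httmono _ _ hi1n
        have hab := habove (tt (i+1)) hlt hle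
        have hne : u (tt (i+1)) ≠ 0 := by
          intro h0
          rw [h0, norm_zero] at hab
          linarith
        have hdiff : tt (i+1) - tt i = hstep := by
          simp only [httdef]
          push_cast
          ring
        have hinc := hInc' (tt i) (tt (i+1)) (htt0 i (le_of_lt hi)).1
          (httmono i (i+1) (Nat.le_succ i)) hi1.2 (by rw [hdiff]; exact hhh₀) hne
        rw [hdiff] at hinc
        have hneg : 2*a''*(1+Kv)^m - b''*‖u (tt (i+1))‖^m ≤ 0 := by
          have h1 : θ^m < ‖u (tt (i+1))‖^m := Real.rpow_lt_rpow hθ0 hab hm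
          nlinarith [hθeq]
        nlinarith [hh0.le]
      have htel : ‖u t₀‖ - ‖u s₁‖ ≤ (n:ℝ) * (hstep * (δ/T)) := by
        have h1 : ∑ i ∈ Finset.range n, (‖u (tt (i+1))‖ - ‖u (tt i)‖)
            = ‖u (tt n)‖ - ‖u (tt 0)‖ := Finset.sum_range_sub (fun i => ‖u (tt i)‖) n
        have h2 : tt 0 = s₁ := by simp [httdef]
        have h3 : ∑ i ∈ Finset.range n, (‖u (tt (i+1))‖ - ‖u (tt i)‖)
            ≤ ∑ _i ∈ Finset.range n, hstep * (δ/T) :=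
          Finset.sum_le_sum (fun i hi => hstep' i (Finset.mem_range.1 hi))
        rw [h1, httn, h2] at h3
        rw [Finset.sum_const, Finset.card_range, nsmul_eq_mul] at h3
        exact h3
      have hnh : (n:ℝ) * hstep = t₀ - s₁ := by
        rw [hstepdef]
        field_simp
      have h4 : ‖u t₀‖ - ‖u s₁‖ ≤ (t₀ - s₁) * (δ/T) := by
        have h5 : (n:ℝ) * (hstep * (δ/T)) = ((n:ℝ) * hstep) * (δ/T) := by ring
        rw [h5, hnh] at htel
        exact htel
      have hts : t₀ - s₁ ≤ T := by linarith [ht₀.2, hs₁0]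
      have hfrac : (t₀ - s₁)*(δ/T) ≤ δ := by
        calc (t₀-s₁)*(δ/T) ≤ T*(δ/T) := mul_le_mul_of_nonneg_right hts (by positivity)
        _ = δ := by field_simp
      linarith [hs₁mem.2]
    have hcontra : ‖u t₀‖ ≤ θ := by
      by_contra h6
      push_neg at h6
      have h7 := hfinal ((‖u t₀‖ - θ)/2) (by linarith)
      linarith
    linarith
  -- conclusion
  have hθR : θ ≤ (4*a''/b'')^(1/m) * (1+Kv) := by
    apply mul_le_mul_of_nonneg_right _ (by linarith)
    apply Real.rpow_le_rpow (by positivity) _ (by positivity)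
    gcongr
    linarith
  apply ciSup_le
  intro t
  exact (hmain t t.2).trans hθR
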